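/- The fiber counts of the insertion map B satisfy the following recursion: f(empty tree) = 1, and if T is a nonempty binary tree with multiplicities with root multiplicity k, left subtree L of size l and right subtree R of size r (so |T| = n = k + l + r), then f(T) = ((n−1)! / ((k−1)!·l!·r!)) · f(L) · f(R), where f(T) is the number of packed words w with B(w) = T. -/

import Mathlib

open scoped Classical

/-- Words over the positive integers. -/
abbrev Word : Type := List ℕ+

/-- Evaluation of a word: number of occurrences of each letter. -/
def ev (w : Word) : ℕ+ → ℕ := fun a => w.count a

/-- A monoid congruence on the free monoid `(ℕ⁺)*`. -/
def IsCongruence (r : Word → Word → Prop) : Prop :=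
  Equivalence r ∧ ∀ u v u' v', r u v → r u' v' → r (u ++ u') (v ++ v')

/-- Restriction of a word to the letters belonging to a set `I`. -/
noncomputable def restrictTo (I : Set ℕ+) (w : Word) : Word :=
  w.filter fun a => decide (a ∈ I)

/-- `I` is an interval (order-convex subset) of `ℕ⁺`. -/
def IsIntervalSet (I : Set ℕ+) : Prop :=
  ∀ ⦃a b c : ℕ+⦄, a ∈ I → c ∈ I → a ≤ b → b ≤ c → b ∈ I

/-- Compatibility with restriction to alphabet intervals. -/
def CompatRestrict (r : Word → Word → Prop) : Prop :=
  ∀ I : Set ℕ+, IsIntervalSet I → ∀ u v, r u v → r (restrictTo I u) (restrictTo I v)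

/-- `r` is a `φ`-congruence. -/
def IsPhiCongruence (φ : Word → Word) (r : Word → Word → Prop) : Prop :=
  ∀ u v, r u v ↔ (r (φ u) (φ v) ∧ ev u = ev v)

/-- Standardization. -/
def std (w : Word) : Word :=
  (List.range w.length).map fun i =>
    ⟨((List.range w.length).countP fun j =>
        decide (w.getD j 1 < w.getD i 1 ∨ (w.getD j 1 = w.getD i 1 ∧ j < i))) + 1,
      Nat.succ_pos _⟩

/-- Packing. -/
def pack (w : Word) : Word :=
  w.map fun a => ⟨(w.dedup.countP fun b => decide (b < a)) + 1, Nat.succ_pos _⟩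

theorem parkBad_ex (w : Word) :
    ∃ d : ℕ, 1 ≤ d ∧ (w.countP fun a : ℕ+ => decide ((a : ℕ) ≤ d)) < d :=
  ⟨w.length + 1, Nat.succ_le_succ (Nat.zero_le _), by
    have h : (w.countP fun a : ℕ+ => decide ((a : ℕ) ≤ w.length + 1)) ≤ w.length :=
      List.countP_le_length
    omega⟩

/-- The smallest `d ≥ 1` such that fewer than `d` letters of `w` are `≤ d`. -/
noncomputable def parkBad (w : Word) : ℕ := Nat.find (parkBad_ex w)

/-- One pass of the parkization procedure, with fuel. -/
noncomputable def parkAux : ℕ → Word → Word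
  | 0, w => w
  | f + 1, w =>
    if parkBad w ≤ w.length then
      parkAux f (w.map fun a : ℕ+ => if parkBad w < (a : ℕ) then (a - 1 : ℕ+) else a)
    else w

/-- Parkization. The fuel `(sum of the letters)` always suffices,
since every pass strictly decreases the sum of the letters. -/
noncomputable def park (w : Word) : Word := parkAux (w.map fun a => (a : ℕ)).sum w

/-- Smallest monoid congruence containing `base`. -/
def CongClosure (base : Word → Word → Prop) (u v : Word) : Prop :=
  ∀ r : Word → Word → Prop, IsCongruence r → (∀ x y, base x y → r x y) → r u v

def sylvBase (x y : Word) : Prop :=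
  ∃ (a b c : ℕ+) (v : Word), a ≤ b ∧ b < c ∧
    x = a :: c :: (v ++ [b]) ∧ y = c :: a :: (v ++ [b])

/-- The sylvester congruence. -/
def sylv : Word → Word → Prop := CongClosure sylvBase

def stalBase (x y : Word) : Prop :=
  ∃ (a b : ℕ+) (v : Word), x = b :: a :: (v ++ [b]) ∧ y = a :: b :: (v ++ [b])

/-- The stalactic congruence. -/
def stal : Word → Word → Prop := CongClosure stalBase

def sylvSharpBase (x y : Word) : Prop :=
  ∃ (a b c : ℕ+) (v : Word), a < b ∧ b ≤ c ∧
    x = b :: (v ++ [a, c]) ∧ y = b :: (v ++ [c, a])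

/-- The #-sylvester congruence. -/
def sylvSharp : Word → Word → Prop := CongClosure sylvSharpBase

/-- The taïga congruence: join of the sylvester and stalactic congruences. -/
def taiga : Word → Word → Prop := CongClosure fun u v => sylv u v ∨ stal u v

/-- Planar binary trees with letter labels. -/
inductive BT : Type where
  | leaf : BT
  | node : BT → ℕ+ → BT → BT
deriving DecidableEq

/-- Binary search tree insertion of a letter. -/
def BT.insert : BT → ℕ+ → BT
  | .leaf, l => .node .leaf l .leaf
  | .node L b R, l => if l ≤ b then .node (L.insert l) b R else .node L b (R.insert l)

/-- Binary search tree of a word: insert the letters from right to left. -/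
def bst (w : Word) : BT := w.foldr (fun l t => t.insert l) .leaf

/-- Planar binary trees labelled by a letter and a multiplicity. -/
inductive BSTM : Type where
  | leaf : BSTM
  | node : BSTM → ℕ+ → ℕ+ → BSTM → BSTM   -- left, letter, multiplicity, right
deriving DecidableEq

/-- Insertion of a letter into a binary search tree with multiplicities. -/
def BSTM.insert : BSTM → ℕ+ → BSTM
  | .leaf, l => .node .leaf l 1 .leaf
  | .node L l' k R, l =>
    if l = l' then .node L l' (k + 1) R
    else if l < l' then .node (L.insert l) l' k R
    else .node L l' k (R.insert l)

/-- The `P`-symbol: insert the letters of `w` from right to left. -/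
def Pmap (w : Word) : BSTM := w.foldr (fun l t => t.insert l) .leaf

/-- Letters of a BSTM in left-to-right (infix) order. -/
def BSTM.letters : BSTM → List ℕ+
  | .leaf => []
  | .node L l _ R => L.letters ++ l :: R.letters

/-- The binary search tree property for a BSTM. -/
def BSTM.IsSearchTree : BSTM → Prop
  | .leaf => True
  | .node L l _ R =>
      (∀ x ∈ L.letters, x < l) ∧ (∀ x ∈ R.letters, l < x) ∧
        L.IsSearchTree ∧ R.IsSearchTree

/-- Total multiplicity of a letter in a BSTM. -/
def BSTM.mult : BSTM → ℕ+ → ℕ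
  | .leaf, _ => 0
  | .node L l k R, a => L.mult a + (if a = l then (k : ℕ) else 0) + R.mult a

/-- Size of a BSTM: sum of the multiplicities. -/
def BSTM.size : BSTM → ℕ
  | .leaf => 0
  | .node L _ k R => L.size + (k : ℕ) + R.size

/-- Planar binary trees with multiplicities. -/
inductive BTM : Type where
  | leaf : BTM
  | node : BTM → ℕ+ → BTM → BTM
deriving DecidableEq

/-- Size of a BTM: sum of the multiplicities. -/
def BTM.size : BTM → ℕ
  | .leaf => 0
  | .node L k R => L.size + (k : ℕ) + R.size

/-- Number of nodes of a BTM. -/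
def BTM.numNodes : BTM → ℕ
  | .leaf => 0
  | .node L _ R => L.numNodes + 1 + R.numNodes

/-- Forgetting the letters of a BSTM gives a BTM. -/
def forgetLetters : BSTM → BTM
  | .leaf => .leaf
  | .node L _ k R => .node (forgetLetters L) k (forgetLetters R)

/-- The `B`-symbol: the BTM underlying `P(w)`. -/
def Bmap (w : Word) : BTM := forgetLetters (Pmap w)

/-- A packed word: its set of letters is `{1, …, k}` for some `k`. -/
def IsPacked (w : Word) : Prop := ∀ a ∈ w, ∀ b : ℕ+, b ≤ a → b ∈ w

/-- Number of packed words inserting to the BTM `T`. -/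
noncomputable def fT (T : BTM) : ℕ :=
  Set.ncard {w : Word | IsPacked w ∧ Bmap w = T}

/-- The hook-type product over the subtrees of a BTM. -/
def hookProd : BTM → ℕ
  | .leaf => 1
  | .node L k R =>
      (BTM.node L k R).size * ((k : ℕ) - 1).factorial * hookProd L * hookProd R

/-- Label the nodes of a BTM in infix order starting from a given letter;
returns the labelled tree and the next unused letter. -/
def infixLabelAux : BTM → ℕ+ → BSTM × ℕ+
  | .leaf, n => (.leaf, n)
  | .node L k R, n =>
    let p := infixLabelAux L n
    let q := infixLabelAux R (p.2 + 1)
    (.node p.1 p.2 k q.1, q.2)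

/-- Label the nodes of a BTM by `1, …, k` in infix order. -/
def infixLabel (T : BTM) : BSTM := (infixLabelAux T 1).1


/-! ### Auxiliary lemmas -/

namespace FTRec

/-- truncated subtraction cancel -/
lemma psub_add {a b : ℕ+} (h : a < b) : b - a + a = b := by
  apply PNat.coe_injective
  have hc : (a : ℕ) < (b : ℕ) := h
  rw [PNat.add_coe, PNat.sub_coe, if_pos h]
  omega

lemma padd_sub (x a : ℕ+) : x + a - a = x := by
  apply PNat.coe_injective
  have h : a < x + a := by
    have : (a : ℕ) < (x + a : ℕ+) := by rw [PNat.add_coe]; have := x.pos; omega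
    exact this
  rw [PNat.sub_coe, if_pos h, PNat.add_coe]
  omega

lemma plt_add (x a : ℕ+) : a < x + a := by
  have : (a : ℕ) < ((x + a : ℕ+) : ℕ) := by rw [PNat.add_coe]; have := x.pos; omega
  exact this

/-- relabelling trees -/
def bmapL (f : ℕ+ → ℕ+) : BSTM → BSTM
  | .leaf => .leaf
  | .node L x k R => .node (bmapL f L) (f x) k (bmapL f R)

lemma insert_bmapL {f : ℕ+ → ℕ+} (hf : StrictMono f) (t : BSTM) (x : ℕ+) :
    (bmapL f t).insert (f x) = bmapL f (t.insert x) := by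
  induction t with
  | leaf => simp [BSTM.insert, bmapL]
  | node L y k R ihL ihR =>
    simp only [bmapL, BSTM.insert]
    rcases lt_trichotomy x y with h | h | h
    · rw [if_neg (by exact fun hc => absurd (hf.injective hc) h.ne),
        if_pos (hf h), if_neg h.ne, if_pos h, ihL]; rfl
    · subst h; rw [if_pos rfl, if_pos rfl]; rfl
    · rw [if_neg (by exact fun hc => absurd (hf.injective hc) h.ne'),
        if_neg (by exact fun hc => absurd (hf.lt_iff_lt.mp hc) (not_lt.mpr h.le)),
        if_neg h.ne', if_neg (not_lt.mpr h.le), ihR]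
      rfl

lemma pmap_cons (x : ℕ+) (w : Word) : Pmap (x :: w) = (Pmap w).insert x := rfl

lemma pmap_mapL {f : ℕ+ → ℕ+} (hf : StrictMono f) (w : Word) :
    Pmap (w.map f) = bmapL f (Pmap w) := by
  induction w with
  | nil => rfl
  | cons x w ih => simp [pmap_cons, ih, insert_bmapL hf]

lemma forget_bmapL (f : ℕ+ → ℕ+) (t : BSTM) :
    forgetLetters (bmapL f t) = forgetLetters t := by
  induction t with
  | leaf => rfl
  | node L x k R ihL ihR => simp [bmapL, forgetLetters, ihL, ihR]

lemma bmap_map {f : ℕ+ → ℕ+} (hf : StrictMono f) (w : Word) :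
    Bmap (w.map f) = Bmap w := by
  rw [Bmap, Bmap, pmap_mapL hf, forget_bmapL]

/-- sizes -/
lemma size_insert (t : BSTM) (x : ℕ+) : (t.insert x).size = t.size + 1 := by
  induction t with
  | leaf => rfl
  | node L y k R ihL ihR =>
    simp only [BSTM.insert]
    split_ifs with h1 h2
    · simp [BSTM.size, PNat.add_coe]; omega
    · simp [BSTM.size, ihL]; omega
    · simp [BSTM.size, ihR]; omega

lemma pmap_size (w : Word) : (Pmap w).size = w.length := by
  induction w with
  | nil => rfl
  | cons x w ih => simp [pmap_cons, size_insert, ih]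

lemma forget_size (t : BSTM) : (forgetLetters t).size = t.size := by
  induction t with
  | leaf => rfl
  | node L x k R ihL ihR => simp [forgetLetters, BTM.size, BSTM.size, ihL, ihR]

lemma length_of_bmap {w : Word} {T : BTM} (h : Bmap w = T) : w.length = T.size := by
  rw [← h, Bmap, forget_size, pmap_size]

end FTRec

namespace FTRec

def lowF (a : ℕ+) : ℕ+ → Bool := fun x => decide (x < a)
def highF (a : ℕ+) : ℕ+ → Bool := fun x => decide (a < x)

lemma pmk_succ (n : ℕ) (h : 0 < n) :
    (⟨n, h⟩ : ℕ+) + 1 = ⟨n + 1, Nat.succ_pos n⟩ := by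
  apply PNat.coe_injective; rfl

lemma pmap_append (u : Word) (a : ℕ+) :
    Pmap (u ++ [a]) = .node (Pmap (u.filter (lowF a))) a
      ⟨u.count a + 1, Nat.succ_pos _⟩ (Pmap (u.filter (highF a))) := by
  induction u with
  | nil =>
    show (BSTM.leaf).insert a = _
    simp [BSTM.insert]
    rfl
  | cons x u ih =>
    rw [List.cons_append, pmap_cons, ih]
    show BSTM.insert _ x = _
    simp only [BSTM.insert]
    rcases lt_trichotomy x a with h | h | h
    · rw [if_neg h.ne, if_pos h]
      simp only [lowF, highF, List.filter_cons, List.count_cons, decide_eq_true_eq,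
        if_pos h, if_neg (not_lt.mpr h.le), beq_iff_eq, if_neg h.ne, pmap_cons]
    · subst h
      rw [if_pos rfl]
      simp only [lowF, highF, List.filter_cons, List.count_cons, decide_eq_true_eq,
        if_neg (lt_irrefl x), beq_iff_eq, if_pos rfl]
      exact congrArg (fun m => BSTM.node _ x m _) (pmk_succ _ _)
    · rw [if_neg h.ne', if_neg (not_lt.mpr h.le)]
      simp only [lowF, highF, List.filter_cons, List.count_cons, decide_eq_true_eq,
        if_pos h, if_neg (not_lt.mpr h.le), beq_iff_eq, if_neg h.ne', pmap_cons]

lemma decomp {u : Word} {a : ℕ+} {L R : BTM} {k : ℕ+}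
    (h : Bmap (u ++ [a]) = .node L k R) :
    Bmap (u.filter (lowF a)) = L ∧ (k : ℕ) = u.count a + 1 ∧
      Bmap (u.filter (highF a)) = R := by
  rw [Bmap, pmap_append] at h
  simp only [forgetLetters] at h
  injection h with h1 h2 h3
  exact ⟨h1, by rw [← h2]; rfl, h3⟩

end FTRec

namespace FTRec

def col (a x : ℕ+) : Fin 3 := if x < a then 1 else if x = a then 0 else 2

def subA (a : ℕ+) : ℕ+ → ℕ+ := fun x => x - a
def addA (a : ℕ+) : ℕ+ → ℕ+ := fun x => x + a

lemma addA_strictMono (a : ℕ+) : StrictMono (addA a) :=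
  fun _ _ h => by simp only [addA]; exact add_lt_add_of_lt_of_le h le_rfl

def merge (a : ℕ+) : List (Fin 3) → Word → Word → Word
  | [], _, _ => []
  | i :: c, u, v =>
    if i = 1 then u.headD 1 :: merge a c u.tail v
    else if i = 2 then (v.headD 1 + a) :: merge a c u v.tail
    else a :: merge a c u v

lemma merge_split (a : ℕ+) (w : Word) :
    merge a (w.map (col a)) (w.filter (lowF a)) ((w.filter (highF a)).map (subA a)) = w := by
  induction w with
  | nil => rfl
  | cons x w ih =>
    rcases lt_trichotomy x a with h | h | h
    · simp only [List.map_cons, List.filter_cons, lowF, highF, col, if_pos h,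
        decide_eq_true_eq, if_neg (not_lt.mpr h.le), merge]
      rw [if_pos trivial]
      simp [ih]
    · subst h
      simp only [List.map_cons, List.filter_cons, lowF, highF, col,
        if_neg (lt_irrefl x), if_pos rfl, decide_eq_true_eq, merge]
      rw [if_neg (by decide), if_neg (by decide)]
      simp [ih]
    · simp only [List.map_cons, List.filter_cons, lowF, highF, col, if_pos h,
        decide_eq_true_eq, if_neg (not_lt.mpr h.le), if_neg h.ne', merge]
      rw [if_neg (by decide), if_pos trivial]
      simp only [List.map_cons, List.headD_cons, List.tail_cons]
      rw [subA, psub_add h]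
      simp [ih]

lemma merge_props (a : ℕ+) :
    ∀ (c : List (Fin 3)) (u v : Word), c.count 1 = u.length → c.count 2 = v.length →
      (∀ x ∈ u, x < a) →
      (merge a c u v).filter (lowF a) = u ∧
      (merge a c u v).filter (highF a) = v.map (addA a) ∧
      (merge a c u v).count a = c.count 0 ∧
      (merge a c u v).map (col a) = c := by
  intro c
  induction c with
  | nil =>
    intro u v h1 h2 _
    simp only [List.count_nil] at h1 h2
    rw [List.eq_nil_of_length_eq_zero h1.symm, List.eq_nil_of_length_eq_zero h2.symm]
    simp [merge]
  | cons i c ih =>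
    intro u v h1 h2 hu
    by_cases hi1 : i = 1
    · subst hi1
      rw [List.count_cons_self] at h1
      match u, h1 with
      | x :: u, h1 =>
        have hx : x < a := hu x (List.mem_cons_self)
        have huu : ∀ y ∈ u, y < a := fun y hy => hu y (List.mem_cons_of_mem _ hy)
        have h1' : c.count 1 = u.length := by simpa using h1
        have h2' : c.count 2 = v.length := by
          rw [← h2]; simp [List.count_cons]
        obtain ⟨e1, e2, e3, e4⟩ := ih u v h1' h2' huu
        rw [merge, if_pos rfl]
        simp only [List.headD_cons, List.tail_cons, List.filter_cons, lowF, highF,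
          decide_eq_true_eq, if_pos hx, if_neg (not_lt.mpr hx.le), List.count_cons,
          List.map_cons, e1, e2, e3, e4, col, if_pos hx]
        refine ⟨by trivial, by trivial, ?_, by trivial⟩
        simp [beq_iff_eq, hx.ne, List.count_cons]
    · by_cases hi2 : i = 2
      · subst hi2
        rw [List.count_cons_self] at h2
        match v, h2 with
        | y :: v, h2 =>
          have h1' : c.count 1 = u.length := by
            rw [← h1]; simp [List.count_cons]
          have h2' : c.count 2 = v.length := by simpa using h2
          obtain ⟨e1, e2, e3, e4⟩ := ih u v h1' h2' hu
          rw [merge, if_neg (by decide), if_pos rfl]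
          have hya : a < y + a := plt_add y a
          simp only [List.headD_cons, List.tail_cons, List.filter_cons, lowF, highF,
            decide_eq_true_eq, if_neg (not_lt.mpr hya.le), if_pos hya, List.count_cons,
            List.map_cons, e1, e2, e3, e4, col, if_neg (not_lt.mpr hya.le),
            if_neg hya.ne']
          refine ⟨by trivial, by trivial, ?_, by trivial⟩
          simp [beq_iff_eq, hya.ne', List.count_cons]
      · have hi0 : i = 0 := by omega
        subst hi0
        have h1' : c.count 1 = u.length := by rw [← h1]; simp [List.count_cons]
        have h2' : c.count 2 = v.length := by rw [← h2]; simp [List.count_cons]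
        obtain ⟨e1, e2, e3, e4⟩ := ih u v h1' h2' hu
        rw [merge, if_neg (by decide), if_neg (by decide)]
        simp only [List.filter_cons, lowF, highF, decide_eq_true_eq,
          if_neg (lt_irrefl a), List.count_cons, List.map_cons, e1, e2, e3, e4,
          col, if_neg (lt_irrefl a), if_pos rfl]
        refine ⟨by trivial, by trivial, ?_, by trivial⟩
        simp [List.count_cons]

end FTRec

namespace FTRec

def maxL (u : Word) : ℕ := (u.map (fun x => (x : ℕ))).foldr max 0

def nextL (u : Word) : ℕ+ := ⟨maxL u + 1, Nat.succ_pos _⟩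

lemma le_maxL {u : Word} {x : ℕ+} (h : x ∈ u) : (x : ℕ) ≤ maxL u := by
  induction u with
  | nil => simp at h
  | cons y u ih =>
    rcases List.mem_cons.mp h with h | h
    · subst h; exact le_max_left _ _
    · exact le_trans (ih h) (le_max_right _ _)

lemma maxL_le {u : Word} {m : ℕ} (h : ∀ x ∈ u, (x : ℕ) ≤ m) : maxL u ≤ m := by
  induction u with
  | nil => simp [maxL]
  | cons y u ih =>
    have : maxL (y :: u) = max (y : ℕ) (maxL u) := rfl
    rw [this]
    exact max_le (h y (List.mem_cons_self)) (ih fun x hx => h x (List.mem_cons_of_mem _ hx))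

lemma lt_nextL {u : Word} {x : ℕ+} (h : x ∈ u) : x < nextL u := by
  have h1 : (x : ℕ) < maxL u + 1 := Nat.lt_succ_of_le (le_maxL h)
  exact h1

lemma nextL_filter {w : Word} {a : ℕ+} (hp : IsPacked w) (ha : a ∈ w) :
    nextL (w.filter (lowF a)) = a := by
  apply PNat.coe_injective
  have hle : maxL (w.filter (lowF a)) ≤ (a : ℕ) - 1 := by
    apply maxL_le
    intro x hx
    have := (List.mem_filter.mp hx).2
    have hlt : x < a := by simpa [lowF] using this
    have : (x : ℕ) < (a : ℕ) := hlt
    omega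
  show maxL (w.filter (lowF a)) + 1 = (a : ℕ)
  have hpos : 0 < (a : ℕ) := a.pos
  by_cases hc : (a : ℕ) = 1
  · omega
  · -- a ≥ 2, so a - 1 is a positive letter in the filter
    set b : ℕ+ := ⟨(a : ℕ) - 1, by omega⟩ with hb
    have hba : b < a := by
      have h1 : (b : ℕ) < (a : ℕ) := by
        show (a : ℕ) - 1 < (a : ℕ); omega
      exact (PNat.coe_lt_coe _ _).mp h1
    have hbw : b ∈ w := hp a ha b hba.le
    have hbf : b ∈ w.filter (lowF a) := by
      rw [List.mem_filter]
      exact ⟨hbw, by simp [lowF, hba]⟩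
    have := le_maxL hbf
    have hbc : (b : ℕ) = (a : ℕ) - 1 := rfl
    omega

lemma packed_filter_low {w : Word} (hp : IsPacked w) (a : ℕ+) :
    IsPacked (w.filter (lowF a)) := by
  intro x hx b hb
  obtain ⟨hxw, hxa⟩ := List.mem_filter.mp hx
  have hxa' : x < a := by simpa [lowF] using hxa
  exact List.mem_filter.mpr ⟨hp x hxw b hb, by simp [lowF]; exact lt_of_le_of_lt hb hxa'⟩

lemma packed_high_sub {w : Word} {a : ℕ+} (hp : IsPacked w) (ha : a ∈ w) :
    IsPacked ((w.filter (highF a)).map (subA a)) := by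
  intro x hx b hb
  obtain ⟨y, hy, hyx⟩ := List.mem_map.mp hx
  obtain ⟨hyw, hya⟩ := List.mem_filter.mp hy
  have hya' : a < y := by simpa [highF] using hya
  -- x = y - a
  have hxy : x + a = y := by rw [← hyx, subA, psub_add hya']
  have hbw : b + a ∈ w := by
    apply hp y hyw
    calc b + a ≤ x + a := add_le_add hb le_rfl
    _ = y := hxy
  have hbf : b + a ∈ w.filter (highF a) := by
    rw [List.mem_filter]
    exact ⟨hbw, by simp [highF]; exact plt_add b a⟩
  refine List.mem_map.mpr ⟨b + a, hbf, ?_⟩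
  rw [subA, padd_sub]

lemma count_map_col (a : ℕ+) (t : Word) :
    (t.map (col a)).count 1 = (t.filter (lowF a)).length ∧
    (t.map (col a)).count 0 = t.count a ∧
    (t.map (col a)).count 2 = (t.filter (highF a)).length := by
  induction t with
  | nil => simp
  | cons x t ih =>
    obtain ⟨i1, i0, i2⟩ := ih
    rcases lt_trichotomy x a with h | h | h
    · simp only [List.map_cons, List.filter_cons, List.count_cons, col, lowF, highF,
        if_pos h, decide_eq_true_eq, if_neg (not_lt.mpr h.le), beq_iff_eq, if_neg h.ne]
      refine ⟨?_, ?_, ?_⟩ <;> simp [i1, i0, i2]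
    · subst h
      simp only [List.map_cons, List.filter_cons, List.count_cons, col, lowF, highF,
        if_neg (lt_irrefl x), if_pos rfl, decide_eq_true_eq, beq_iff_eq]
      refine ⟨?_, ?_, ?_⟩ <;> simp [i1, i0, i2, lt_irrefl]
    · simp only [List.map_cons, List.filter_cons, List.count_cons, col, lowF, highF,
        if_pos h, decide_eq_true_eq, if_neg (not_lt.mpr h.le), beq_iff_eq, if_neg h.ne']
      refine ⟨?_, ?_, ?_⟩ <;> simp [i1, i0, i2, not_lt.mpr h.le]

lemma getLastD_concat (a d : ℕ+) : ∀ (t : Word), (t ++ [a]).getLastD d = a := by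
  intro t
  induction t generalizing d with
  | nil => rfl
  | cons x t ih => rw [List.cons_append, List.getLastD_cons]; exact ih x

lemma eq_dropLast_concat {w : Word} (h : w ≠ []) :
    w = w.dropLast ++ [w.getLastD 1] := by
  induction w with
  | nil => exact absurd rfl h
  | cons x w ih =>
    cases w with
    | nil => rfl
    | cons y w =>
      rw [List.getLastD_cons, List.dropLast_cons₂, List.cons_append]
      exact congrArg (x :: ·) (ih (by simp))

end FTRec

namespace FTRec

def CSetF (f : Fin 3 → ℕ) : Set (List (Fin 3)) := {c | ∀ i, c.count i = f i}

lemma len3 (c : List (Fin 3)) : c.length = c.count 0 + c.count 1 + c.count 2 := by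
  induction c with
  | nil => simp
  | cons a c ih =>
    fin_cases a <;> simp [List.count_cons, ih] <;> omega

lemma csetF_finite (f : Fin 3 → ℕ) : (CSetF f).Finite := by
  apply Set.Finite.subset (List.finite_length_eq (Fin 3) (f 0 + f 1 + f 2))
  intro c hc
  have := len3 c
  simp only [Set.mem_setOf_eq]
  rw [this, hc 0, hc 1, hc 2]

lemma csetF_card : ∀ (n : ℕ) (f : Fin 3 → ℕ), f 0 + f 1 + f 2 = n →
    (CSetF f).ncard * ((f 0).factorial * (f 1).factorial * (f 2).factorial) = n.factorial := by
  intro n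
  induction n with
  | zero =>
    intro f hf
    have h0 : f 0 = 0 := by omega
    have h1 : f 1 = 0 := by omega
    have h2 : f 2 = 0 := by omega
    have : CSetF f = {[]} := by
      ext c
      simp only [CSetF, Set.mem_setOf_eq, Set.mem_singleton_iff]
      constructor
      · intro h
        have hl := len3 c
        rw [h 0, h 1, h 2, h0, h1, h2] at hl
        exact List.eq_nil_of_length_eq_zero hl
      · rintro rfl i
        fin_cases i <;> simp [h0, h1, h2]
    rw [this, Set.ncard_singleton, h0, h1, h2]
    simp [Nat.factorial]
  | succ n ih =>
    intro f hf
    classical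
    set B : Fin 3 → Set (List (Fin 3)) := fun i => {c ∈ CSetF f | c.head? = some i} with hB
    have hsub : ∀ i, B i ⊆ CSetF f := fun i c hc => hc.1
    have hfin : ∀ i, (B i).Finite := fun i => (csetF_finite f).subset (hsub i)
    have hcover : CSetF f = B 0 ∪ B 1 ∪ B 2 := by
      ext c
      constructor
      · intro hc
        have hlen : c.length = n + 1 := by rw [len3, hc 0, hc 1, hc 2, hf]
        match c, hlen with
        | x :: t, _ =>
          have hx : (x :: t).head? = some x := rfl
          fin_cases x
          · exact Or.inl (Or.inl ⟨hc, hx⟩)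
          · exact Or.inl (Or.inr ⟨hc, hx⟩)
          · exact Or.inr ⟨hc, hx⟩
      · rintro ((h | h) | h) <;> exact h.1
    have hkey : ∀ i : Fin 3,
        (B i).ncard * ((f 0).factorial * (f 1).factorial * (f 2).factorial) =
          f i * n.factorial := by
      intro i
      cases hfi : f i with
      | zero =>
        have : B i = ∅ := by
          ext c
          simp only [hB, Set.mem_setOf_eq, Set.mem_empty_iff_false, iff_false, not_and]
          intro hc hh
          match c, hh with
          | x :: t, hh =>
            have hxi : x = i := by simpa using hh
            subst hxi
            have := hc x
            rw [List.count_cons_self] at this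
            omega
        rw [this, Set.ncard_empty]
        ring
      | succ j =>
        set f' := Function.update f i j with hf'
        have himg : B i = (List.cons i) '' CSetF f' := by
          ext c
          simp only [hB, Set.mem_setOf_eq, Set.mem_image]
          constructor
          · rintro ⟨hc, hh⟩
            match c, hh with
            | x :: t, hh =>
              have hxi : x = i := by simpa using hh
              refine ⟨t, fun i' => ?_, by rw [hxi]⟩
              have h5 := hc i'
              rw [List.count_cons, hxi] at h5
              rw [hf', Function.update_apply]
              by_cases hii : i' = i
              · subst hii
                simp only [beq_self_eq_true, if_true, if_pos rfl] at h5 ⊢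
                omega
              · have hii' : ¬(i = i') := fun hcc => hii hcc.symm
                rw [if_neg hii]
                rw [show (i == i') = false from beq_eq_false_iff_ne.mpr hii'] at h5
                simpa using h5
          · rintro ⟨t, ht, rfl⟩
            constructor
            · intro i'
              rw [List.count_cons, ht i', hf', Function.update_apply]
              by_cases hii : i' = i
              · subst hii
                rw [if_pos rfl, show (i' == i') = true from beq_self_eq_true i']
                simp only [if_true]
                omega
              · have hii' : ¬(i = i') := fun hcc => hii hcc.symm
                rw [if_neg hii, show (i == i') = false from beq_eq_false_iff_ne.mpr hii']
                simp
            · rfl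
        have hinj : Function.Injective (List.cons i) := fun x y hxy => by
          injection hxy
        have hsum' : f' 0 + f' 1 + f' 2 = n := by
          have hs : ∀ g : Fin 3 → ℕ, ∑ x, g x = g 0 + g 1 + g 2 := fun g => by
            rw [Fin.sum_univ_three]
          have h1 : ∑ x, f' x = j + ∑ x ∈ Finset.univ.erase i, f x := by
            rw [hf', Finset.sum_update_of_mem (Finset.mem_univ i),
              Finset.sdiff_singleton_eq_erase]
          have h2 : ∑ x, f x = f i + ∑ x ∈ Finset.univ.erase i, f x :=
            (Finset.add_sum_erase _ f (Finset.mem_univ i)).symm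
          have h3 := hs f
          have h4 := hs f'
          omega
        have hIH := ih f' hsum'
        have hfac : (f 0).factorial * (f 1).factorial * (f 2).factorial =
            (j + 1) * ((f' 0).factorial * (f' 1).factorial * (f' 2).factorial) := by
          have hp : ∀ g : Fin 3 → ℕ,
              ∏ x, (g x).factorial =
                (g 0).factorial * (g 1).factorial * (g 2).factorial := fun g => by
            rw [Fin.prod_univ_three]
          have hcomm : ∀ x, (f' x).factorial =
              Function.update (fun y => (f y).factorial) i j.factorial x := by
            intro x
            rw [hf', Function.update_apply, Function.update_apply]
            split_ifs <;> rfl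
          have h1 : ∏ x, (f' x).factorial =
              j.factorial * ∏ x ∈ Finset.univ.erase i, (f x).factorial := by
            rw [Finset.prod_congr rfl fun x _ => hcomm x,
              Finset.prod_update_of_mem (Finset.mem_univ i),
              Finset.sdiff_singleton_eq_erase]
          have h2 : ∏ x, (f x).factorial =
              (f i).factorial * ∏ x ∈ Finset.univ.erase i, (f x).factorial :=
            (Finset.mul_prod_erase _ _ (Finset.mem_univ i)).symm
          rw [← hp f, ← hp f', h2, h1, hfi, Nat.factorial_succ]
          ring
        rw [himg, Set.ncard_image_of_injective _ hinj, hfac]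
        calc (CSetF f').ncard * ((j + 1) * ((f' 0).factorial * (f' 1).factorial * (f' 2).factorial))
            = (j + 1) * ((CSetF f').ncard * ((f' 0).factorial * (f' 1).factorial * (f' 2).factorial)) := by ring
          _ = (j + 1) * n.factorial := by rw [hIH]
    have hdisj : ∀ i i' : Fin 3, i ≠ i' → Disjoint (B i) (B i') := by
      intro i i' hii
      rw [Set.disjoint_left]
      rintro c ⟨_, h1⟩ ⟨_, h2⟩
      rw [h1] at h2
      exact hii (Option.some_injective _ h2)
    have hcard : (CSetF f).ncard = (B 0).ncard + (B 1).ncard + (B 2).ncard := by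
      rw [hcover, Set.ncard_union_eq (by
          rw [Set.disjoint_union_left]
          exact ⟨hdisj 0 2 (by decide), hdisj 1 2 (by decide)⟩)
        ((hfin 0).union (hfin 1)) (hfin 2),
        Set.ncard_union_eq (hdisj 0 1 (by decide)) (hfin 0) (hfin 1)]
    calc (CSetF f).ncard * ((f 0).factorial * (f 1).factorial * (f 2).factorial)
        = (B 0).ncard * ((f 0).factorial * (f 1).factorial * (f 2).factorial)
          + (B 1).ncard * ((f 0).factorial * (f 1).factorial * (f 2).factorial)
          + (B 2).ncard * ((f 0).factorial * (f 1).factorial * (f 2).factorial) := by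
          rw [hcard]; ring
      _ = f 0 * n.factorial + f 1 * n.factorial + f 2 * n.factorial := by
          rw [hkey 0, hkey 1, hkey 2]
      _ = (n + 1) * n.factorial := by rw [← hf]; ring
      _ = (n + 1).factorial := (Nat.factorial_succ n).symm

end FTRec

namespace FTRec

lemma finite_words (n B : ℕ) :
    {w : Word | w.length = n ∧ ∀ x ∈ w, (x : ℕ) ≤ B}.Finite := by
  induction n with
  | zero =>
    apply Set.Finite.subset (Set.finite_singleton ([] : Word))
    rintro w ⟨hw, -⟩
    exact List.eq_nil_of_length_eq_zero hw
  | succ n ih =>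
    apply Set.Finite.subset (Set.Finite.image (fun p : ℕ+ × Word => p.1 :: p.2)
      (Set.Finite.prod (Set.Finite.preimage (fun a b _ _ h => PNat.coe_injective h)
        (Set.finite_Iic B) : {x : ℕ+ | (x : ℕ) ≤ B}.Finite) ih))
    rintro w ⟨hw, hb⟩
    match w, hw with
    | x :: w, hw =>
      refine ⟨(x, w), ⟨?_, ?_, ?_⟩, rfl⟩
      · exact hb x (List.mem_cons_self)
      · simpa using hw
      · exact fun y hy => hb y (List.mem_cons_of_mem _ hy)

lemma packed_letter_le {w : Word} (hp : IsPacked w) {x : ℕ+} (hx : x ∈ w) :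
    (x : ℕ) ≤ w.length := by
  classical
  have hsub : Finset.Icc 1 x ⊆ w.toFinset := by
    intro b hb
    rw [Finset.mem_Icc] at hb
    exact List.mem_toFinset.mpr (hp x hx b hb.2)
  have h1 : (Finset.Icc 1 x).card = (x : ℕ) := by
    rw [PNat.card_Icc]; simp
  calc (x : ℕ) = (Finset.Icc 1 x).card := h1.symm
    _ ≤ w.toFinset.card := Finset.card_le_card hsub
    _ ≤ w.length := List.toFinset_card_le w

lemma aset_finite (T : BTM) : {w : Word | IsPacked w ∧ Bmap w = T}.Finite := by
  apply Set.Finite.subset (finite_words T.size T.size)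
  rintro w ⟨hp, hb⟩
  exact ⟨length_of_bmap hb, fun x hx =>
    le_trans (packed_letter_le hp hx) (le_of_eq (length_of_bmap hb))⟩

lemma ncard_sprod {α β : Type*} (s : Set α) (t : Set β) :
    (s ×ˢ t).ncard = s.ncard * t.ncard := by
  rw [← Nat.card_coe_set_eq, ← Nat.card_coe_set_eq, ← Nat.card_coe_set_eq,
    Nat.card_congr (Equiv.Set.prod s t), Nat.card_prod]

lemma bmap_ne_nil {w : Word} {L R : BTM} {k : ℕ+} (h : Bmap w = .node L k R) :
    w ≠ [] := by
  rintro rfl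
  simp [Bmap, Pmap, forgetLetters] at h

lemma fT_leaf : fT BTM.leaf = 1 := by
  have : {w : Word | IsPacked w ∧ Bmap w = BTM.leaf} = {[]} := by
    ext w
    simp only [Set.mem_setOf_eq, Set.mem_singleton_iff]
    constructor
    · rintro ⟨-, hb⟩
      match w with
      | [] => rfl
      | x :: w =>
        exfalso
        rw [Bmap, pmap_cons] at hb
        cases h : Pmap w with
        | leaf => rw [h] at hb; simp [BSTM.insert, forgetLetters] at hb
        | node L a k R =>
          rw [h] at hb
          rw [BSTM.insert] at hb
          split_ifs at hb <;> simp [forgetLetters] at hb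
    · rintro rfl
      exact ⟨fun a ha => by simp at ha, rfl⟩
  rw [fT, this, Set.ncard_singleton]

end FTRec

namespace FTRec

def phi (w : Word) : List (Fin 3) × Word × Word :=
  ((w.dropLast).map (col (w.getLastD 1)), w.filter (lowF (w.getLastD 1)),
    (w.filter (highF (w.getLastD 1))).map (subA (w.getLastD 1)))

def gmap (p : List (Fin 3) × Word × Word) : Word :=
  merge (nextL p.2.1) p.1 p.2.1 p.2.2 ++ [nextL p.2.1]

lemma filter_low_concat (w' : Word) (a : ℕ+) :
    (w' ++ [a]).filter (lowF a) = w'.filter (lowF a) := by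
  rw [List.filter_append]
  simp [lowF]

lemma filter_high_concat (w' : Word) (a : ℕ+) :
    (w' ++ [a]).filter (highF a) = w'.filter (highF a) := by
  rw [List.filter_append]
  simp [highF]

lemma phi_concat (w' : Word) (a : ℕ+) :
    phi (w' ++ [a]) = (w'.map (col a), w'.filter (lowF a),
      (w'.filter (highF a)).map (subA a)) := by
  unfold phi
  rw [getLastD_concat, List.dropLast_concat, filter_low_concat, filter_high_concat]

lemma maxL_mem {u : Word} (h : u ≠ []) : ∃ y ∈ u, (y : ℕ) = maxL u := by
  induction u with
  | nil => exact absurd rfl h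
  | cons x u ih =>
    have hm : maxL (x :: u) = max (x : ℕ) (maxL u) := rfl
    rcases le_or_gt (maxL u) (x : ℕ) with h1 | h1
    · exact ⟨x, List.mem_cons_self, by rw [hm, max_eq_left h1]⟩
    · have hu : u ≠ [] := by
        rintro rfl
        simp [maxL] at h1
      obtain ⟨y, hy, hy2⟩ := ih hu
      exact ⟨y, List.mem_cons_of_mem _ hy, by rw [hm, max_eq_right h1.le, hy2]⟩

lemma mem_of_lt_nextL {u : Word} (hp : IsPacked u) {b : ℕ+} (hb : b < nextL u) : b ∈ u := by
  have hb' : (b : ℕ) ≤ maxL u := by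
    have : (b : ℕ) < maxL u + 1 := hb
    omega
  have hu : u ≠ [] := by
    rintro rfl
    have hbp := b.pos
    have h0 : maxL ([] : Word) = 0 := rfl
    omega
  obtain ⟨y, hy, hy2⟩ := maxL_mem hu
  have : b ≤ y := by
    have : (b : ℕ) ≤ (y : ℕ) := by omega
    exact this
  exact hp y hy b this

lemma map_sub_add {h : Word} {a : ℕ+} (hh : ∀ y ∈ h, a < y) :
    (h.map (subA a)).map (addA a) = h := by
  rw [List.map_map]
  have : ∀ y ∈ h, (addA a ∘ subA a) y = id y := by
    intro y hy
    show (y - a) + a = y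
    exact psub_add (hh y hy)
  rw [List.map_congr_left this, List.map_id]

lemma map_add_sub (v : Word) (a : ℕ+) :
    (v.map (addA a)).map (subA a) = v := by
  rw [List.map_map]
  have : (subA a ∘ addA a) = id := funext fun x => padd_sub x a
  rw [this, List.map_id]

end FTRec

namespace FTRec

def fkr (k0 k1 k2 : ℕ) : Fin 3 → ℕ := fun i => if i = 0 then k0 else if i = 1 then k1 else k2

@[simp] lemma fkr_zero (k0 k1 k2 : ℕ) : fkr k0 k1 k2 0 = k0 := rfl
@[simp] lemma fkr_one (k0 k1 k2 : ℕ) : fkr k0 k1 k2 1 = k1 := rfl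
@[simp] lemma fkr_two (k0 k1 k2 : ℕ) : fkr k0 k1 k2 2 = k2 := rfl

lemma forward_spec {L R : BTM} {k : ℕ+} {w : Word}
    (hp : IsPacked w) (hb : Bmap w = .node L k R) :
    ((phi w).1 ∈ CSetF (fkr ((k : ℕ) - 1) L.size R.size) ∧
      (IsPacked (phi w).2.1 ∧ Bmap (phi w).2.1 = L) ∧
      (IsPacked (phi w).2.2 ∧ Bmap (phi w).2.2 = R)) ∧
    gmap (phi w) = w := by
  have hne := bmap_ne_nil hb
  obtain ⟨w', a, rfl⟩ : ∃ w' a, w = w' ++ [a] :=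
    ⟨w.dropLast, w.getLastD 1, eq_dropLast_concat hne⟩
  obtain ⟨hL, hk, hR⟩ := decomp hb
  have haw : a ∈ w' ++ [a] := List.mem_append_right _ (List.mem_singleton.mpr rfl)
  have hu_p : IsPacked ((w' ++ [a]).filter (lowF a)) := packed_filter_low hp a
  rw [filter_low_concat] at hu_p
  have hv_p : IsPacked (((w' ++ [a]).filter (highF a)).map (subA a)) := packed_high_sub hp haw
  rw [filter_high_concat] at hv_p
  have hhigh : ∀ y ∈ w'.filter (highF a), a < y := by
    intro y hy
    have := (List.mem_filter.mp hy).2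
    simpa [highF] using this
  have hBv : Bmap ((w'.filter (highF a)).map (subA a)) = R := by
    have h2 := bmap_map (addA_strictMono a) ((w'.filter (highF a)).map (subA a))
    rw [map_sub_add hhigh] at h2
    rw [← h2, hR]
  obtain ⟨e1, e0, e2⟩ := count_map_col a w'
  have hlenu : (w'.filter (lowF a)).length = L.size := length_of_bmap hL
  have hlenv : (w'.filter (highF a)).length = R.size := length_of_bmap hR
  have hcmem : ∀ i : Fin 3, (w'.map (col a)).count i = fkr ((k : ℕ) - 1) L.size R.size i := by
    intro i
    match i with
    | ⟨0, _⟩ =>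
      show (w'.map (col a)).count 0 = fkr ((k : ℕ) - 1) L.size R.size 0
      rw [e0, fkr_zero]
      omega
    | ⟨1, _⟩ =>
      show (w'.map (col a)).count 1 = fkr ((k : ℕ) - 1) L.size R.size 1
      rw [e1, fkr_one, hlenu]
    | ⟨2, _⟩ =>
      show (w'.map (col a)).count 2 = fkr ((k : ℕ) - 1) L.size R.size 2
      rw [e2, fkr_two, hlenv]
  have hnext : nextL (w'.filter (lowF a)) = a := by
    have h3 := nextL_filter hp haw
    rwa [filter_low_concat] at h3
  have hg : gmap (phi (w' ++ [a])) = w' ++ [a] := by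
    rw [phi_concat]
    show merge (nextL (w'.filter (lowF a))) (w'.map (col a)) (w'.filter (lowF a))
        ((w'.filter (highF a)).map (subA a)) ++ [nextL (w'.filter (lowF a))] = w' ++ [a]
    rw [hnext, merge_split]
  rw [phi_concat]
  exact ⟨⟨hcmem, ⟨hu_p, hL⟩, ⟨hv_p, hBv⟩⟩, by rw [← phi_concat]; exact hg⟩

end FTRec

namespace FTRec

lemma backward_spec {L R : BTM} {k : ℕ+} {c : List (Fin 3)} {u v : Word}
    (hc : ∀ i : Fin 3, c.count i = fkr ((k : ℕ) - 1) L.size R.size i)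
    (hu : IsPacked u ∧ Bmap u = L) (hv : IsPacked v ∧ Bmap v = R) :
    (IsPacked (gmap (c, u, v)) ∧ Bmap (gmap (c, u, v)) = .node L k R) ∧
      phi (gmap (c, u, v)) = (c, u, v) := by
  set a := nextL u with hadef
  have hua : ∀ x ∈ u, x < a := fun x hx => lt_nextL hx
  have hc1 : c.count 1 = u.length := by rw [hc 1, fkr_one, length_of_bmap hu.2]
  have hc2 : c.count 2 = v.length := by rw [hc 2, fkr_two, length_of_bmap hv.2]
  have hc0 : c.count 0 = (k : ℕ) - 1 := by rw [hc 0, fkr_zero]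
  obtain ⟨e1, e2, e3, e4⟩ := merge_props a c u v hc1 hc2 hua
  set M := merge a c u v with hM
  have hgm : gmap (c, u, v) = M ++ [a] := rfl
  -- membership helpers
  have husub : ∀ y, y ∈ u → y ∈ M ++ [a] := fun y hy =>
    List.mem_append_left _ (List.mem_of_mem_filter (e1 ▸ hy : y ∈ M.filter (lowF a)))
  have hvsub : ∀ y, y ∈ v.map (addA a) → y ∈ M ++ [a] := fun y hy =>
    List.mem_append_left _ (List.mem_of_mem_filter (e2 ▸ hy : y ∈ M.filter (highF a)))
  have hasub : a ∈ M ++ [a] := List.mem_append_right _ (List.mem_singleton.mpr rfl)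
  have hmem : ∀ x ∈ M ++ [a], x ∈ u ∨ x = a ∨ x ∈ v.map (addA a) := by
    intro x hx
    rcases List.mem_append.mp hx with hx | hx
    · rcases lt_trichotomy x a with h | h | h
      · exact Or.inl (e1 ▸ List.mem_filter.mpr ⟨hx, by simp [lowF, h]⟩)
      · exact Or.inr (Or.inl h)
      · exact Or.inr (Or.inr (e2 ▸ List.mem_filter.mpr ⟨hx, by simp [highF, h]⟩))
    · exact Or.inr (Or.inl (List.mem_singleton.mp hx))
  have hble : ∀ b : ℕ+, b ≤ a → b ∈ M ++ [a] := by
    intro b hb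
    rcases eq_or_lt_of_le hb with h | h
    · exact h ▸ hasub
    · exact husub b (mem_of_lt_nextL hu.1 h)
  -- packedness
  have hpacked : IsPacked (M ++ [a]) := by
    intro x hx b hb
    rcases hmem x hx with hxu | hxa | hxv
    · exact husub b (hu.1 x hxu b hb)
    · exact hble b (hxa ▸ hb)
    · obtain ⟨y, hy, rfl⟩ := List.mem_map.mp hxv
      rcases le_or_gt b a with h | h
      · exact hble b h
      · have hby : b - a ≤ y := by
          have c1 : ((b - a : ℕ+) : ℕ) = (b : ℕ) - (a : ℕ) := by
            rw [PNat.sub_coe, if_pos h]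
          have c2 : (b : ℕ) ≤ ((addA a y : ℕ+) : ℕ) := hb
          have c3 : ((addA a y : ℕ+) : ℕ) = (y : ℕ) + (a : ℕ) := by
            show ((y + a : ℕ+) : ℕ) = (y : ℕ) + (a : ℕ)
            rw [PNat.add_coe]
          have c4 : (a : ℕ) < (b : ℕ) := h
          have : ((b - a : ℕ+) : ℕ) ≤ (y : ℕ) := by omega
          exact this
        have hbv : b - a ∈ v := hv.1 y hy (b - a) hby
        have : addA a (b - a) = b := psub_add h
        exact hvsub b (this ▸ List.mem_map_of_mem (f := addA a) hbv)
  -- Bmap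
  have hcount : M.count a + 1 = (k : ℕ) := by
    rw [e3, hc0]
    have := k.pos
    omega
  have hbm : Bmap (M ++ [a]) = .node L k R := by
    rw [Bmap, pmap_append]
    simp only [forgetLetters]
    have hk2 : (⟨M.count a + 1, Nat.succ_pos _⟩ : ℕ+) = k := by
      apply PNat.coe_injective
      exact hcount
    rw [hk2, e1, e2]
    have hBv : forgetLetters (Pmap (v.map (addA a))) = R := by
      show Bmap (v.map (addA a)) = R
      rw [bmap_map (addA_strictMono a), hv.2]
    rw [hBv]
    show BTM.node (Bmap u) k R = _
    rw [hu.2]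
  -- phi
  have hphi : phi (gmap (c, u, v)) = (c, u, v) := by
    rw [hgm, phi_concat, e1, e2, e4, map_add_sub]
  exact ⟨⟨hgm ▸ hpacked, hgm ▸ hbm⟩, hphi⟩

end FTRec

namespace FTRec

lemma fT_node (L R : BTM) (k : ℕ+) :
    fT (BTM.node L k R) * (((k : ℕ) - 1).factorial * L.size.factorial * R.size.factorial) =
      ((k : ℕ) - 1 + L.size + R.size).factorial * (fT L * fT R) := by
  classical
  set A := {w : Word | IsPacked w ∧ Bmap w = BTM.node L k R} with hA
  set AL := {w : Word | IsPacked w ∧ Bmap w = L} with hAL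
  set AR := {w : Word | IsPacked w ∧ Bmap w = R} with hAR
  set C := CSetF (fkr ((k : ℕ) - 1) L.size R.size) with hC
  have hbij : Set.BijOn phi A (C ×ˢ (AL ×ˢ AR)) := by
    refine ⟨?_, ?_, ?_⟩
    · intro w hw
      obtain ⟨⟨h1, h2, h3⟩, -⟩ := forward_spec hw.1 hw.2
      exact Set.mem_prod.mpr ⟨h1, Set.mem_prod.mpr ⟨h2, h3⟩⟩
    · intro w1 h1 w2 h2 he
      rw [← (forward_spec h1.1 h1.2).2, ← (forward_spec h2.1 h2.2).2, he]
    · rintro ⟨c, u, v⟩ hcv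
      have hcm : c ∈ CSetF (fkr ((k : ℕ) - 1) L.size R.size) := hcv.1
      have hum : IsPacked u ∧ Bmap u = L := hcv.2.1
      have hvm : IsPacked v ∧ Bmap v = R := hcv.2.2
      obtain ⟨hW, hphi⟩ := backward_spec hcm hum hvm
      exact ⟨gmap (c, u, v), hW, hphi⟩
  have h1 : A.ncard = C.ncard * (AL.ncard * AR.ncard) := by
    rw [← Set.ncard_image_of_injOn hbij.injOn, hbij.image_eq, ncard_sprod, ncard_sprod]
  have hcard := csetF_card ((k : ℕ) - 1 + L.size + R.size)
    (fkr ((k : ℕ) - 1) L.size R.size) (by simp)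
  rw [fkr_zero, fkr_one, fkr_two] at hcard
  have hfA : fT (BTM.node L k R) = A.ncard := rfl
  have hfL : fT L = AL.ncard := rfl
  have hfR : fT R = AR.ncard := rfl
  rw [hfA, hfL, hfR, h1]
  calc C.ncard * (AL.ncard * AR.ncard) *
        (((k : ℕ) - 1).factorial * L.size.factorial * R.size.factorial)
      = (C.ncard * (((k : ℕ) - 1).factorial * L.size.factorial * R.size.factorial)) *
        (AL.ncard * AR.ncard) := by ring
    _ = ((k : ℕ) - 1 + L.size + R.size).factorial * (AL.ncard * AR.ncard) := by rw [hcard]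

end FTRec

theorem fT_recursion' :
    fT BTM.leaf = 1 ∧
      ∀ (L R : BTM) (k : ℕ+),
        (fT (BTM.node L k R) : ℚ) =
          ((((k : ℕ) + L.size + R.size - 1).factorial : ℚ) /
              ((((k : ℕ) - 1).factorial : ℚ) * (L.size.factorial : ℚ) *
                (R.size.factorial : ℚ))) *
            (fT L : ℚ) * (fT R : ℚ) := by
  constructor
  · exact FTRec.fT_leaf
  · intro L R k
    have key := FTRec.fT_node L R k
    have hm : (k : ℕ) + L.size + R.size - 1 = (k : ℕ) - 1 + L.size + R.size := by
      have := k.pos; omega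
    rw [hm]
    have keyQ : (fT (BTM.node L k R) : ℚ) *
        ((((k : ℕ) - 1).factorial : ℚ) * (L.size.factorial : ℚ) * (R.size.factorial : ℚ)) =
        (((k : ℕ) - 1 + L.size + R.size).factorial : ℚ) * ((fT L : ℚ) * (fT R : ℚ)) := by
      exact_mod_cast key
    have h1 : ((((k : ℕ) - 1).factorial : ℕ) : ℚ) ≠ 0 :=
      Nat.cast_ne_zero.mpr (Nat.factorial_ne_zero _)
    have h2 : ((L.size.factorial : ℕ) : ℚ) ≠ 0 :=
      Nat.cast_ne_zero.mpr (Nat.factorial_ne_zero _)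
    have h3 : ((R.size.factorial : ℕ) : ℚ) ≠ 0 :=
      Nat.cast_ne_zero.mpr (Nat.factorial_ne_zero _)
    field_simp
    linear_combination keyQ

theorem fT_recursion :
    fT BTM.leaf = 1 ∧
      ∀ (L R : BTM) (k : ℕ+),
        (fT (BTM.node L k R) : ℚ) =
          ((((k : ℕ) + L.size + R.size - 1).factorial : ℚ) /
              ((((k : ℕ) - 1).factorial : ℚ) * (L.size.factorial : ℚ) *
                (R.size.factorial : ℚ))) *
            (fT L : ℚ) * (fT R : ℚ) := by
  exact fT_recursion'
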